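/- Let Q be a cyclic convex quadrilateral in ℝ² that is not a parallelogram, and suppose Q is also orthodiagonal. Then there exists an ellipse E₀ inscribed in Q whose foci are EP (the circumcenter of Q) and IP (the intersection point of the diagonals of Q). -/

import Mathlib

open Set

noncomputable section

/-- Points of the ellipse with foci `f₁`, `f₂` and major-axis length `2*a`. -/
def EllipseSet (f₁ f₂ : ℂ) (a : ℝ) : Set ℂ := {z : ℂ | dist z f₁ + dist z f₂ = 2 * a}

/-- `E` is the (possibly circular) ellipse with foci `f₁, f₂` and semi-major axis `a`.
It is a circle precisely when `f₁ = f₂`. -/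
def IsEllipse (E : Set ℂ) (f₁ f₂ : ℂ) (a : ℝ) : Prop :=
  dist f₁ f₂ < 2 * a ∧ E = EllipseSet f₁ f₂ a

/-- The full line through `P` and `Q`. -/
def LineThrough (P Q : ℂ) : Set ℂ := {z : ℂ | ∃ θ : ℝ, z = P + θ • (Q - P)}

/-- `E` is tangent to the side `[P,Q]` at `ζ`: the line through `P` and `Q` meets `E`
in the single point `ζ`, which lies on the closed segment `[P,Q]`. -/
def TangentToSideAt (E : Set ℂ) (P Q ζ : ℂ) : Prop :=
  ζ ∈ segment ℝ P Q ∧ E ∩ LineThrough P Q = {ζ}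

/-- `E` is tangent to the side `[P,Q]`. -/
def TangentToSide (E : Set ℂ) (P Q : ℂ) : Prop := ∃ ζ, TangentToSideAt E P Q ζ

/-- A curve `E` is inscribed in the quadrilateral `A₁A₂A₃A₄` (vertices in order)
if it is tangent to each of the four sides. -/
def InscribedInQuad (E : Set ℂ) (A₁ A₂ A₃ A₄ : ℂ) : Prop :=
  TangentToSide E A₁ A₂ ∧ TangentToSide E A₂ A₃ ∧
    TangentToSide E A₃ A₄ ∧ TangentToSide E A₄ A₁

/-- `A₁A₂A₃A₄` is a convex quadrilateral with the vertices listed in cyclic order: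
the four points are in convex position and the diagonals `A₁A₃`, `A₂A₄` meet. -/
def IsConvexQuad (A₁ A₂ A₃ A₄ : ℂ) : Prop :=
  A₁ ∉ convexHull ℝ ({A₂, A₃, A₄} : Set ℂ) ∧
  A₂ ∉ convexHull ℝ ({A₁, A₃, A₄} : Set ℂ) ∧
  A₃ ∉ convexHull ℝ ({A₁, A₂, A₄} : Set ℂ) ∧
  A₄ ∉ convexHull ℝ ({A₁, A₂, A₃} : Set ℂ) ∧
  (segment ℝ A₁ A₃ ∩ segment ℝ A₂ A₄).Nonempty

def IsParallelogram (A₁ A₂ A₃ A₄ : ℂ) : Prop := A₁ + A₃ = A₂ + A₄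

/-- The diagonals `A₁A₃` and `A₂A₄` are perpendicular. -/
def Orthodiagonal (A₁ A₂ A₃ A₄ : ℂ) : Prop :=
  (A₃ - A₁).re * (A₄ - A₂).re + (A₃ - A₁).im * (A₄ - A₂).im = 0

/-- `P` is equidistant from the four points (the circumcenter, when they are concyclic). -/
def IsCircCenter (P A₁ A₂ A₃ A₄ : ℂ) : Prop :=
  dist P A₁ = dist P A₂ ∧ dist P A₂ = dist P A₃ ∧ dist P A₃ = dist P A₄

/-- `P` is the intersection point of the diagonals `A₁A₃` and `A₂A₄`. -/
def IsDiagPoint (P A₁ A₂ A₃ A₄ : ℂ) : Prop :=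
  P ∈ segment ℝ A₁ A₃ ∧ P ∈ segment ℝ A₂ A₄

/-- The plane vectors `z` and `w` are parallel. -/
def Para (z w : ℂ) : Prop := z.re * w.im = z.im * w.re

/-- The quadrilateral `A₁A₂A₃A₄` has (at least) one pair of parallel opposite sides. -/
def IsTrapezoid (A₁ A₂ A₃ A₄ : ℂ) : Prop :=
  Para (A₂ - A₁) (A₄ - A₃) ∨ Para (A₃ - A₂) (A₁ - A₄)


open Complex in
private lemma dist_coords (P w : ℂ) (hw : ‖w‖ = 1) (ξ₁ η₁ ξ₂ η₂ : ℝ) :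
    dist (P + ξ₁*w + η₁*(I*w)) (P + ξ₂*w + η₂*(I*w))
      = Real.sqrt ((ξ₁-ξ₂)^2 + (η₁-η₂)^2) := by
  rw [Complex.dist_eq]
  have h : (P + ξ₁*w + η₁*(I*w)) - (P + ξ₂*w + η₂*(I*w))
      = ((ξ₁-ξ₂ : ℝ) + (η₁-η₂ : ℝ)*I) * w := by push_cast; ring
  rw [h, norm_mul, hw, mul_one, Complex.norm_def, Complex.normSq_add_mul_I]

open Complex in
private lemma coords_inj {w : ℂ} (hw : w ≠ 0) {ξ₁ η₁ ξ₂ η₂ : ℝ}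
    (h : (ξ₁:ℂ)*w + η₁*(I*w) = ξ₂*w + η₂*(I*w)) : ξ₁ = ξ₂ ∧ η₁ = η₂ := by
  have h2 : ((ξ₁-ξ₂ : ℝ) + (η₁-η₂ : ℝ)*I) * w = 0 := by push_cast; linear_combination h
  rcases mul_eq_zero.1 h2 with h3 | h3
  · have hre := congrArg Complex.re h3
    have him := congrArg Complex.im h3
    simp at hre him
    constructor <;> linarith
  · exact absurd h3 hw

private lemma lineThrough_symm (P Q : ℂ) : LineThrough P Q = LineThrough Q P := by
  ext z
  constructor <;> rintro ⟨θ, rfl⟩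
  · exact ⟨1-θ, by simp only [Complex.real_smul]; push_cast; ring⟩
  · exact ⟨1-θ, by simp only [Complex.real_smul]; push_cast; ring⟩

private lemma tangentToSide_symm {E : Set ℂ} {P Q : ℂ} (h : TangentToSide E P Q) :
    TangentToSide E Q P := by
  obtain ⟨ζ, h1, h2⟩ := h
  exact ⟨ζ, by rwa [segment_symm], by rwa [lineThrough_symm P Q] at h2⟩


open Complex in
private lemma comb_eq (P w : ℂ) (x y σ τ : ℝ) (h : σ + τ = 1) :
    σ • (P + (x:ℝ)*w) + τ • (P + (y:ℝ)*(I*w)) =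
      P + ((σ*x : ℝ):ℂ)*w + ((τ*y : ℝ):ℂ)*(I*w) := by
  have hc : ((σ:ℂ) + τ) = 1 := by exact_mod_cast h
  simp only [Complex.real_smul]
  push_cast
  linear_combination P * hc

open Complex in
set_option maxHeartbeats 2000000 in
private lemma side_tangent (O P w : ℂ) (x y α β aell : ℝ)
    (hw : ‖w‖ = 1)
    (hO : O = P + (α:ℝ)*w + (β:ℝ)*(I*w))
    (hR : x^2 - 2*x*α = y^2 - 2*y*β)
    (hx : 0 < x*(x-α)) (hy : 0 < y*(y-β))
    (hl : 0 < (x*y)*(x*y - x*β - y*α))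
    (h2a : 2*aell = Real.sqrt ((x-α)^2 + (y-β)^2)) :
    TangentToSide (EllipseSet O P aell) (P + (x:ℝ)*w) (P + (y:ℝ)*(I*w)) := by
  have hw0 : w ≠ 0 := by
    intro h; rw [h] at hw; simp at hw
  have hx0 : x ≠ 0 := by rintro rfl; simp at hx
  have hy0 : y ≠ 0 := by rintro rfl; simp at hy
  have hxa : x - α ≠ 0 := by intro h; rw [h] at hx; simp at hx
  have hyb : y - β ≠ 0 := by intro h; rw [h] at hy; simp at hy
  have hDxy : 0 < (2*x*y - x*β - y*α)*(x*y) := by nlinarith [hl, sq_nonneg (x*y)]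
  have hD0 : (2*x*y - x*β - y*α) ≠ 0 := by
    intro h; rw [h] at hDxy; simp at hDxy
  have hD2 : 0 < (2*x*y - x*β - y*α)^2 := by positivity
  -- sign facts
  have hsD : 0 < x*(y-β)*(2*x*y - x*β - y*α) := by
    have h1 : 0 < (y*(y-β))*((2*x*y - x*β - y*α)*(x*y)) := mul_pos hy hDxy
    have hy2 : 0 < y^2 := by positivity
    nlinarith [h1, hy2]
  have h1sD : 0 < y*(x-α)*(2*x*y - x*β - y*α) := by
    have h1 : 0 < (x*(x-α))*((2*x*y - x*β - y*α)*(x*y)) := mul_pos hx hDxy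
    have hx2 : 0 < x^2 := by positivity
    nlinarith [h1, hx2]
  have htlD : 0 < (x*y - x*β - y*α)*(2*x*y - x*β - y*α) := by
    have h1 : 0 < ((x*y)*(x*y - x*β - y*α))*((2*x*y - x*β - y*α)*(x*y)) := mul_pos hl hDxy
    have hxy2 : 0 < (x*y)^2 := by positivity
    nlinarith [h1, hxy2]
  obtain ⟨t, ht_def⟩ : ∃ t : ℝ, t = x*y/(2*x*y - x*β - y*α) := ⟨_, rfl⟩
  obtain ⟨s, hs_def⟩ : ∃ s : ℝ, s = x*(y-β)/(2*x*y - x*β - y*α) := ⟨_, rfl⟩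
  have htD : t*(2*x*y - x*β - y*α) = x*y := by rw [ht_def, div_mul_cancel₀ _ hD0]
  have hsDeq : s*(2*x*y - x*β - y*α) = x*(y-β) := by rw [hs_def, div_mul_cancel₀ _ hD0]
  have hs0 : 0 < s := by
    have h2 : s * (2*x*y - x*β - y*α)^2 = (x*(y-β))*(2*x*y - x*β - y*α) := by
      rw [hs_def]; field_simp
    nlinarith [hsD, hD2, h2]
  have hs1 : s < 1 := by
    have h2 : (1-s) * (2*x*y - x*β - y*α)^2 = (y*(x-α))*(2*x*y - x*β - y*α) := by
      linear_combination (-(2*x*y - x*β - y*α)) * hsDeq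
    nlinarith [h1sD, hD2, h2]
  have ht0 : 0 < t := by
    have h2 : t * (2*x*y - x*β - y*α)^2 = (x*y)*(2*x*y - x*β - y*α) := by
      rw [ht_def]; field_simp
    nlinarith [hDxy, hD2, h2]
  have ht1 : t < 1 := by
    have h2 : (1-t) * (2*x*y - x*β - y*α)^2 = (x*y - x*β - y*α)*(2*x*y - x*β - y*α) := by
      linear_combination (-(2*x*y - x*β - y*α)) * htD
    nlinarith [htlD, hD2, h2]
  -- relations between t and s
  have rs1 : t*(x-α) = (1-s)*x := by
    apply mul_right_cancel₀ hD0; linear_combination (x-α)*htD + x*hsDeq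
  have rs2 : t*(y-β) = s*y := by
    rw [ht_def, hs_def]; field_simp
  set X : ℂ := P + (x:ℝ)*w with hX
  set Y : ℂ := P + (y:ℝ)*(I*w) with hY
  set ζ : ℂ := P + (((1-s)*x : ℝ):ℂ)*w + ((s*y : ℝ):ℂ)*(I*w) with hζ
  have hSpos : 0 < (x-α)^2 + (y-β)^2 := by positivity
  have hPzero : P = P + ((0:ℝ):ℂ)*w + ((0:ℝ):ℂ)*(I*w) := by push_cast; ring
  -- general point on the line, in coordinates
  have hline : ∀ θ : ℝ, X + θ • (Y - X) = P + (((1-θ)*x : ℝ):ℂ)*w + ((θ*y : ℝ):ℂ)*(I*w) := by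
    intro θ
    have hce := comb_eq P w x y (1-θ) θ (by ring)
    rw [hX, hY]
    simp only [Complex.real_smul] at hce ⊢
    push_cast at hce ⊢
    linear_combination hce
  -- distance from a point of the line to O, rewritten using the reflection O'
  have hdistO : ∀ θ : ℝ, dist (P + (((1-θ)*x : ℝ):ℂ)*w + ((θ*y : ℝ):ℂ)*(I*w)) O
      = Real.sqrt (((1-θ)*x-(x-α))^2 + (θ*y-(y-β))^2) := by
    intro θ
    rw [hO, dist_coords P w hw]
    congr 1
    linear_combination (1-2*θ) * hR
  have hdistP : ∀ θ : ℝ, dist (P + (((1-θ)*x : ℝ):ℂ)*w + ((θ*y : ℝ):ℂ)*(I*w)) P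
      = Real.sqrt (((1-θ)*x)^2 + (θ*y)^2) := by
    intro θ
    nth_rewrite 2 [hPzero]
    rw [dist_coords P w hw]
    norm_num
  -- ζ is on the line with parameter s
  have hζline : ζ = X + s • (Y - X) := by rw [hline s, hζ]
  -- ζ is in the ellipse
  have hζE : ζ ∈ EllipseSet O P aell := by
    show dist ζ O + dist ζ P = 2*aell
    rw [hζ, hdistO s, hdistP s]
    have e1 : ((1-s)*x-(x-α))^2 + (s*y-(y-β))^2 = (1-t)^2 * ((x-α)^2 + (y-β)^2) := by
      linear_combination ((2-t)*(x-α) - (1-s)*x) * rs1 + ((2-t)*(y-β) - s*y) * rs2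
    have e2 : ((1-s)*x)^2 + (s*y)^2 = t^2 * ((x-α)^2 + (y-β)^2) := by
      linear_combination (-(t*(x-α)) - (1-s)*x) * rs1 + (-(t*(y-β)) - s*y) * rs2
    rw [e1, e2, Real.sqrt_mul (by positivity) _, Real.sqrt_mul (by positivity) _,
      Real.sqrt_sq (by linarith : (0:ℝ) ≤ 1-t), Real.sqrt_sq ht0.le, ← h2a]
    ring
  -- ζ is on the segment X Y
  have hζseg : ζ ∈ segment ℝ X Y := by
    refine ⟨1-s, s, by linarith, hs0.le, by ring, ?_⟩
    rw [hX, hY, comb_eq P w x y (1-s) s (by ring), hζ]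
  refine ⟨ζ, hζseg, ?_⟩
  apply Set.eq_singleton_iff_unique_mem.2
  refine ⟨⟨hζE, ⟨s, hζline⟩⟩, ?_⟩
  rintro z ⟨hzE, θ, hzL⟩
  rw [hline θ] at hzL
  have hzE' : dist z O + dist z P = 2*aell := hzE
  have hdistzO := hdistO θ
  have hdistzP := hdistP θ
  rw [← hzL] at hdistzO hdistzP
  set O' : ℂ := P + ((x-α : ℝ):ℂ)*w + ((y-β : ℝ):ℂ)*(I*w) with hO'
  have hdO'P : dist O' P = 2*aell := by
    rw [hO']
    nth_rewrite 2 [hPzero]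
    rw [dist_coords P w hw]
    rw [h2a]
    norm_num
  have hdzO' : dist z O' = dist z O := by
    rw [hzL, hO', dist_coords P w hw, ← hzL, hdistzO]
  have hsum : dist O' z + dist z P = dist O' P := by
    rw [dist_comm O' z, hdzO', hdO'P]
    exact hzE'
  have hwb : z ∈ segment ℝ O' P := by
    rw [mem_segment_iff_wbtw]
    exact dist_add_dist_eq_iff.1 hsum
  obtain ⟨u, v, hu, hv, huv, hzuv⟩ := hwb
  have hzc : P + ((u*(x-α) : ℝ):ℂ)*w + ((u*(y-β) : ℝ):ℂ)*(I*w) = z := by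
    rw [← hzuv, hO']
    simp only [Complex.real_smul]
    have hc : ((u:ℂ) + v) = 1 := by exact_mod_cast huv
    push_cast
    linear_combination (-P) * hc
  rw [hzL] at hzc
  have hco := coords_inj hw0 (show ((u*(x-α):ℝ):ℂ)*w + ((u*(y-β):ℝ):ℂ)*(I*w)
      = (((1-θ)*x : ℝ):ℂ)*w + ((θ*y : ℝ):ℂ)*(I*w) from by linear_combination hzc)
  obtain ⟨hc1, hc2⟩ := hco
  have huD : u * (2*x*y - x*β - y*α) = x*y := by
    linear_combination y*hc1 + x*hc2
  have hut : u = t := by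
    have h3 : (u - t)*(2*x*y - x*β - y*α) = 0 := by linear_combination huD - htD
    rcases mul_eq_zero.1 h3 with h4 | h4
    · linarith
    · exact absurd h4 hD0
  rw [hzL, hζ]
  have g1 : (1-θ)*x = (1-s)*x := by rw [← rs1, ← hc1, hut]
  have g2 : θ*y = s*y := by rw [← rs2, ← hc2, hut]
  rw [g1, g2]

set_option maxHeartbeats 2000000 in
/-- A cyclic, orthodiagonal convex quadrilateral which is not a
parallelogram admits an inscribed ellipse whose foci are the circumcenter `EP` and the
diagonal intersection point `IP`. -/
theorem cyclic_orthodiagonal_has_besant_ellipse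
    (A₁ A₂ A₃ A₄ EP IP : ℂ)
    (hconv : IsConvexQuad A₁ A₂ A₃ A₄)
    (hEP : IsCircCenter EP A₁ A₂ A₃ A₄)
    (hIP : IsDiagPoint IP A₁ A₂ A₃ A₄)
    (hnp : ¬ IsParallelogram A₁ A₂ A₃ A₄)
    (horth : Orthodiagonal A₁ A₂ A₃ A₄) :
    ∃ (E : Set ℂ) (a : ℝ), IsEllipse E EP IP a ∧ InscribedInQuad E A₁ A₂ A₃ A₄ := by
  classical
  obtain ⟨h1, h2, h3, h4, -⟩ := hconv
  obtain ⟨hIP13, hIP24⟩ := hIP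
  have horth' : (A₃ - A₁).re * (A₄ - A₂).re + (A₃ - A₁).im * (A₄ - A₂).im = 0 := horth
  -- segments are inside convex hulls of vertex triples
  have hseg24 : segment ℝ A₂ A₄ ⊆ convexHull ℝ ({A₂, A₃, A₄} : Set ℂ) := by
    rw [← convexHull_pair]
    exact convexHull_mono (by intro z hz; rcases hz with rfl | rfl <;> simp)
  have hseg24' : segment ℝ A₂ A₄ ⊆ convexHull ℝ ({A₁, A₂, A₄} : Set ℂ) := by
    rw [← convexHull_pair]
    exact convexHull_mono (by intro z hz; rcases hz with rfl | rfl <;> simp)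
  have hseg13 : segment ℝ A₁ A₃ ⊆ convexHull ℝ ({A₁, A₃, A₄} : Set ℂ) := by
    rw [← convexHull_pair]
    exact convexHull_mono (by intro z hz; rcases hz with rfl | rfl <;> simp)
  have hseg13' : segment ℝ A₁ A₃ ⊆ convexHull ℝ ({A₁, A₂, A₃} : Set ℂ) := by
    rw [← convexHull_pair]
    exact convexHull_mono (by intro z hz; rcases hz with rfl | rfl <;> simp)
  have hIPne1 : IP ≠ A₁ := by rintro rfl; exact h1 (hseg24 hIP24)
  have hIPne3 : IP ≠ A₃ := by rintro rfl; exact h3 (hseg24' hIP24)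
  have hIPne2 : IP ≠ A₂ := by rintro rfl; exact h2 (hseg13 hIP13)
  have hIPne4 : IP ≠ A₄ := by rintro rfl; exact h4 (hseg13' hIP13)
  have hA31 : A₃ ≠ A₁ := by
    rintro rfl; exact h3 (subset_convexHull ℝ _ (by simp))
  have hA42 : A₄ ≠ A₂ := by
    rintro rfl; exact h4 (subset_convexHull ℝ _ (by simp))
  -- segment parameters
  obtain ⟨pa, pb, hpa, hpb, hpab, hpeq⟩ := hIP13
  obtain ⟨qa, qb, hqa, hqb, hqab, hqeq⟩ := hIP24
  have hpeqc : (pa:ℂ)*A₁ + (pb:ℂ)*A₃ = IP := by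
    simpa [Complex.real_smul] using hpeq
  have hqeqc : (qa:ℂ)*A₂ + (qb:ℂ)*A₄ = IP := by
    simpa [Complex.real_smul] using hqeq
  have hpabc : (pa:ℂ) + (pb:ℂ) = 1 := by exact_mod_cast hpab
  have hqabc : (qa:ℂ) + (qb:ℂ) = 1 := by exact_mod_cast hqab
  have hpb0 : pb ≠ 0 := by
    rintro rfl
    apply hIPne1
    have hpa1 : pa = 1 := by linarith
    rw [← hpeqc, hpa1]; push_cast; ring
  have hpb1 : pb ≠ 1 := by
    rintro rfl
    apply hIPne3
    have hpa0 : pa = 0 := by linarith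
    rw [← hpeqc, hpa0]; push_cast; ring
  have hqb0 : qb ≠ 0 := by
    rintro rfl
    apply hIPne2
    have hqa1 : qa = 1 := by linarith
    rw [← hqeqc, hqa1]; push_cast; ring
  have hqb1 : qb ≠ 1 := by
    rintro rfl
    apply hIPne4
    have hqa0 : qa = 0 := by linarith
    rw [← hqeqc, hqa0]; push_cast; ring
  have hpb0' : 0 < pb := lt_of_le_of_ne hpb ((Ne.symm hpb0))
  have hpb1' : pb < 1 := lt_of_le_of_ne (by linarith) hpb1
  have hqb0' : 0 < qb := lt_of_le_of_ne hqb ((Ne.symm hqb0))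
  have hqb1' : qb < 1 := lt_of_le_of_ne (by linarith) hqb1
  -- rotation w and coordinates
  obtain ⟨L, hL_def⟩ : ∃ L : ℝ, L = ‖A₃ - A₁‖ := ⟨_, rfl⟩
  have hu0 : A₃ - A₁ ≠ 0 := sub_ne_zero_of_ne hA31
  have hv0 : A₄ - A₂ ≠ 0 := sub_ne_zero_of_ne hA42
  have hL : 0 < L := by rw [hL_def]; exact norm_pos_iff.2 hu0
  have hLc0 : ((L:ℝ):ℂ) ≠ 0 := by exact_mod_cast hL.ne'
  obtain ⟨w, hw_def⟩ : ∃ w : ℂ, w = (A₃ - A₁) / ((L:ℝ):ℂ) := ⟨_, rfl⟩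
  have hw : ‖w‖ = 1 := by
    rw [hw_def, norm_div, Complex.norm_real, Real.norm_eq_abs, abs_of_pos hL, ← hL_def, div_self hL.ne']
  have hw0 : w ≠ 0 := by
    intro h; rw [h] at hw; simp at hw
  have hu_eq : A₃ - A₁ = ((L:ℝ):ℂ)*w := by
    rw [hw_def, mul_div_cancel₀ _ hLc0]
  have hns : Complex.normSq (A₃ - A₁) = L^2 := by
    rw [hL_def]; exact (Complex.sq_norm _).symm
  -- the cross product and the perpendicular direction
  obtain ⟨cr, hcr_def⟩ : ∃ cr : ℝ,
      cr = (A₃ - A₁).re * (A₄ - A₂).im - (A₃ - A₁).im * (A₄ - A₂).re := ⟨_, rfl⟩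
  have hvcu : (A₄ - A₂) * (starRingEnd ℂ) (A₃ - A₁) = (cr:ℝ) * Complex.I := by
    apply Complex.ext
    · simp only [Complex.mul_re, Complex.conj_re, Complex.conj_im, Complex.ofReal_re,
        Complex.I_re, Complex.I_im, Complex.ofReal_im]
      linear_combination horth'
    · simp only [Complex.mul_im, Complex.conj_re, Complex.conj_im, Complex.ofReal_re,
        Complex.I_re, Complex.I_im, Complex.ofReal_im]
      rw [hcr_def]; ring
  have hv_u : (A₄ - A₂) * ((L:ℝ):ℂ)^2 = (cr:ℝ) * (Complex.I * (A₃ - A₁)) := by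
    have h2 := congrArg (fun z => z * (A₃ - A₁)) hvcu
    rw [mul_assoc, mul_comm ((starRingEnd ℂ) (A₃ - A₁)) (A₃ - A₁), Complex.mul_conj, hns] at h2
    push_cast at h2
    linear_combination h2
  have hv_eq : A₄ - A₂ = (cr:ℂ)/(L:ℂ)*(Complex.I*w) := by
    rw [hw_def]
    field_simp
    linear_combination hv_u
  have hcr0 : cr ≠ 0 := by
    intro h
    rw [h] at hv_eq
    push_cast at hv_eq
    simp at hv_eq
    exact hv0 hv_eq
  have hcrL : cr/L ≠ 0 := div_ne_zero hcr0 hL.ne' 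

  -- coordinates of the four vertices
  obtain ⟨xa, hxa_def⟩ : ∃ xa : ℝ, xa = -(pb*L) := ⟨_, rfl⟩
  obtain ⟨xc, hxc_def⟩ : ∃ xc : ℝ, xc = (1-pb)*L := ⟨_, rfl⟩
  obtain ⟨yb, hyb_def⟩ : ∃ yb : ℝ, yb = -(qb*(cr/L)) := ⟨_, rfl⟩
  obtain ⟨ye, hye_def⟩ : ∃ ye : ℝ, ye = (1-qb)*(cr/L) := ⟨_, rfl⟩
  have hA1 : A₁ = IP + (xa:ℝ)*w := by
    rw [hxa_def]
    push_cast
    linear_combination hpeqc - (pb:ℂ) * hu_eq - A₁ * hpabc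
  have hA3 : A₃ = IP + (xc:ℝ)*w := by
    rw [hxc_def]
    push_cast
    linear_combination hpeqc - A₁ * hpabc + (1-(pb:ℂ)) * hu_eq
  have hA2 : A₂ = IP + (yb:ℝ)*(Complex.I*w) := by
    rw [hyb_def]
    push_cast
    linear_combination hqeqc - A₂ * hqabc - (qb:ℂ) * hv_eq
  have hA4 : A₄ = IP + (ye:ℝ)*(Complex.I*w) := by
    rw [hye_def]
    push_cast
    linear_combination hqeqc - A₂ * hqabc + (1-(qb:ℂ)) * hv_eq
  have hxaneg : xa < 0 := by rw [hxa_def]; nlinarith [hpb0', hL]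
  have hxcpos : 0 < xc := by rw [hxc_def]; nlinarith [hpb1', hL]
  have hyne : yb ≠ ye := by
    intro h
    apply hcrL
    rw [hyb_def, hye_def] at h
    linear_combination -h
  -- coordinates of the circumcenter
  obtain ⟨α, hα_def⟩ : ∃ α : ℝ, α = (EP-IP).re*w.re + (EP-IP).im*w.im := ⟨_, rfl⟩
  obtain ⟨β, hβ_def⟩ : ∃ β : ℝ, β = -((EP-IP).re*w.im) + (EP-IP).im*w.re := ⟨_, rfl⟩
  have hw2 : w.re^2 + w.im^2 = 1 := by
    have h := Complex.sq_norm w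
    rw [hw, Complex.normSq_apply] at h
    linear_combination -h
  have hEPc : EP = IP + (α:ℝ)*w + (β:ℝ)*(Complex.I*w) := by
    apply Complex.ext
    · simp only [Complex.add_re, Complex.mul_re, Complex.ofReal_re, Complex.ofReal_im,
        Complex.I_re, Complex.I_im, Complex.mul_im, hα_def, hβ_def, Complex.sub_re,
        Complex.sub_im]
      linear_combination (-(EP.re - IP.re)) * hw2
    · simp only [Complex.add_im, Complex.mul_re, Complex.ofReal_re, Complex.ofReal_im,
        Complex.I_re, Complex.I_im, Complex.mul_im, hα_def, hβ_def, Complex.sub_re,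
        Complex.sub_im]
      linear_combination (-(EP.im - IP.im)) * hw2
  -- coordinate forms of the vertices
  have hA1c : A₁ = IP + ((xa:ℝ):ℂ)*w + ((0:ℝ):ℂ)*(Complex.I*w) := by
    rw [hA1]; push_cast; ring
  have hA3c : A₃ = IP + ((xc:ℝ):ℂ)*w + ((0:ℝ):ℂ)*(Complex.I*w) := by
    rw [hA3]; push_cast; ring
  have hA2c : A₂ = IP + ((0:ℝ):ℂ)*w + ((yb:ℝ):ℂ)*(Complex.I*w) := by
    rw [hA2]; push_cast; ring
  have hA4c : A₄ = IP + ((0:ℝ):ℂ)*w + ((ye:ℝ):ℂ)*(Complex.I*w) := by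
    rw [hA4]; push_cast; ring
  -- equations from the circumcenter property
  have sq_of_dist : ∀ X Y : ℝ, Real.sqrt X = Real.sqrt Y → 0 ≤ X → 0 ≤ Y → X = Y := by
    intro X Y h hX hY
    rw [← Real.sq_sqrt hX, h, Real.sq_sqrt hY]
  have E12 : (α-xa)^2 + (β-0)^2 = (α-0)^2 + (β-yb)^2 := by
    have e := hEP.1
    rw [hEPc, hA1c, hA2c, dist_coords IP w hw, dist_coords IP w hw] at e
    exact sq_of_dist _ _ e (by positivity) (by positivity)
  have E13 : (α-xa)^2 + (β-0)^2 = (α-xc)^2 + (β-0)^2 := by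
    have e := hEP.1.trans hEP.2.1
    rw [hEPc, hA1c, hA3c, dist_coords IP w hw, dist_coords IP w hw] at e
    exact sq_of_dist _ _ e (by positivity) (by positivity)
  have E24 : (α-0)^2 + (β-yb)^2 = (α-0)^2 + (β-ye)^2 := by
    have e := hEP.2.1.trans hEP.2.2
    rw [hEPc, hA2c, hA4c, dist_coords IP w hw, dist_coords IP w hw] at e
    exact sq_of_dist _ _ e (by positivity) (by positivity)
  have hα2 : 2*α = xa + xc := by
    have h3 : (xc - xa)*(2*α - xa - xc) = 0 := by linear_combination E13
    rcases mul_eq_zero.1 h3 with h4 | h4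
    · nlinarith [hxaneg, hxcpos]
    · linarith
  have hβ2 : 2*β = yb + ye := by
    have h3 : (ye - yb)*(2*β - yb - ye) = 0 := by linear_combination E24
    rcases mul_eq_zero.1 h3 with h4 | h4
    · exact absurd (by linarith : yb = ye) hyne
    · linarith
  have hbe : yb*ye = xa*xc := by linear_combination xa*hα2 - yb*hβ2 + E12
  have hac : xa*xc < 0 := mul_neg_of_neg_of_pos hxaneg hxcpos
  have hyb0 : yb ≠ 0 := by
    intro h; rw [h, zero_mul] at hbe; exact absurd hbe.symm (ne_of_lt hac)
  have hye0 : ye ≠ 0 := by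
    intro h; rw [h, mul_zero] at hbe; exact absurd hbe.symm (ne_of_lt hac)
  -- the semi-major axis
  obtain ⟨aell, haell_def⟩ : ∃ aell : ℝ,
      aell = Real.sqrt ((xa-α)^2 + (yb-β)^2) / 2 := ⟨_, rfl⟩
  have hSpos : (0:ℝ) < (xa-α)^2 + (yb-β)^2 := by
    have : xa - α ≠ 0 := by intro h; linarith [hα2, hxaneg, hxcpos]
    positivity
  have h2a1 : 2*aell = Real.sqrt ((xa-α)^2 + (yb-β)^2) := by rw [haell_def]; ring
  have hceq : (xc-α)^2 = (xa-α)^2 := by linear_combination (xa - xc) * hα2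
  have heeq : (ye-β)^2 = (yb-β)^2 := by linear_combination (yb - ye) * hβ2
  have h2a2 : 2*aell = Real.sqrt ((xc-α)^2 + (yb-β)^2) := by rw [h2a1, hceq]
  have h2a3 : 2*aell = Real.sqrt ((xc-α)^2 + (ye-β)^2) := by rw [h2a1, hceq, heeq]
  have h2a4 : 2*aell = Real.sqrt ((xa-α)^2 + (ye-β)^2) := by rw [h2a1, heeq]
  -- the hypotheses of the side lemma
  have hxa2 : 0 < xa^2 := by rw [sq]; exact mul_pos_of_neg_of_neg hxaneg hxaneg
  have hxc2 : 0 < xc^2 := by rw [sq]; exact mul_pos hxcpos hxcpos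
  have hxxa : 0 < xa*(xa-α) := by
    have e : xa*(xa-α) = (xa^2 - xa*xc)/2 := by linear_combination (-(xa)/2) * hα2
    rw [e]; linarith [hxa2, hac]
  have hxxc : 0 < xc*(xc-α) := by
    have e : xc*(xc-α) = (xc^2 - xa*xc)/2 := by linear_combination (-(xc)/2) * hα2
    rw [e]; linarith [hxc2, hac]
  have hyyb : 0 < yb*(yb-β) := by
    have e : yb*(yb-β) = (yb^2 - xa*xc)/2 := by
      linear_combination (-(yb)/2) * hβ2 + (-(1:ℝ)/2) * hbe
    rw [e]; linarith [sq_nonneg yb, hac]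
  have hyye : 0 < ye*(ye-β) := by
    have e : ye*(ye-β) = (ye^2 - xa*xc)/2 := by
      linear_combination (-(ye)/2) * hβ2 + (-(1:ℝ)/2) * hbe
    rw [e]; linarith [sq_nonneg ye, hac]
  have hl12 : 0 < (xa*yb)*(xa*yb - xa*β - yb*α) := by
    have hG : (xa*yb)*(xa*yb - xa*β - yb*α) = (-(xa*xc))*(xa^2+yb^2)/2 := by
      linear_combination (-(xa*yb^2)/2) * hα2 + (-(xa^2*yb)/2) * hβ2 + (-(xa^2)/2) * hbe
    rw [hG]
    have h5 : 0 < xa^2 + yb^2 := by positivity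
    have := mul_pos (neg_pos.2 hac) h5
    linarith
  have hl32 : 0 < (xc*yb)*(xc*yb - xc*β - yb*α) := by
    have hG : (xc*yb)*(xc*yb - xc*β - yb*α) = (-(xa*xc))*(xc^2+yb^2)/2 := by
      linear_combination (-(xc*yb^2)/2) * hα2 + (-(xc^2*yb)/2) * hβ2 + (-(xc^2)/2) * hbe
    rw [hG]
    have h5 : 0 < xc^2 + yb^2 := by positivity
    have := mul_pos (neg_pos.2 hac) h5
    linarith
  have hl34 : 0 < (xc*ye)*(xc*ye - xc*β - ye*α) := by
    have hG : (xc*ye)*(xc*ye - xc*β - ye*α) = (-(xa*xc))*(xc^2+ye^2)/2 := by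
      linear_combination (-(xc*ye^2)/2) * hα2 + (-(xc^2*ye)/2) * hβ2 + (-(xc^2)/2) * hbe
    rw [hG]
    have h5 : 0 < xc^2 + ye^2 := by positivity
    have := mul_pos (neg_pos.2 hac) h5
    linarith
  have hl14 : 0 < (xa*ye)*(xa*ye - xa*β - ye*α) := by
    have hG : (xa*ye)*(xa*ye - xa*β - ye*α) = (-(xa*xc))*(xa^2+ye^2)/2 := by
      linear_combination (-(xa*ye^2)/2) * hα2 + (-(xa^2*ye)/2) * hβ2 + (-(xa^2)/2) * hbe
    rw [hG]
    have h5 : 0 < xa^2 + ye^2 := by positivity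
    have := mul_pos (neg_pos.2 hac) h5
    linarith
  have hR12 : xa^2 - 2*xa*α = yb^2 - 2*yb*β := by
    linear_combination (-xa) * hα2 + yb * hβ2 + hbe
  have hR32 : xc^2 - 2*xc*α = yb^2 - 2*yb*β := by
    linear_combination (-xc) * hα2 + yb * hβ2 + hbe
  have hR34 : xc^2 - 2*xc*α = ye^2 - 2*ye*β := by
    linear_combination (-xc) * hα2 + ye * hβ2 + hbe
  have hR14 : xa^2 - 2*xa*α = ye^2 - 2*ye*β := by
    linear_combination (-xa) * hα2 + ye * hβ2 + hbe
  -- the four tangencies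
  have hT12 : TangentToSide (EllipseSet EP IP aell) A₁ A₂ := by
    rw [hA1, hA2]
    exact side_tangent EP IP w xa yb α β aell hw hEPc hR12 hxxa hyyb hl12 h2a1
  have hT23 : TangentToSide (EllipseSet EP IP aell) A₂ A₃ := by
    apply tangentToSide_symm
    rw [hA2, hA3]
    exact side_tangent EP IP w xc yb α β aell hw hEPc hR32 hxxc hyyb hl32 h2a2
  have hT34 : TangentToSide (EllipseSet EP IP aell) A₃ A₄ := by
    rw [hA3, hA4]
    exact side_tangent EP IP w xc ye α β aell hw hEPc hR34 hxxc hyye hl34 h2a3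
  have hT41 : TangentToSide (EllipseSet EP IP aell) A₄ A₁ := by
    apply tangentToSide_symm
    rw [hA1, hA4]
    exact side_tangent EP IP w xa ye α β aell hw hEPc hR14 hxxa hyye hl14 h2a4
  -- the focal condition
  have hIPc : IP = IP + ((0:ℝ):ℂ)*w + ((0:ℝ):ℂ)*(Complex.I*w) := by push_cast; ring
  have hlt : dist EP IP < 2*aell := by
    have hd : dist EP IP = Real.sqrt ((α-0)^2 + (β-0)^2) := by
      rw [hEPc]
      nth_rewrite 2 [hIPc]
      exact dist_coords IP w hw α β 0 0
    rw [hd, h2a1]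
    apply Real.sqrt_lt_sqrt (by positivity)
    have key : (α-0)^2+(β-0)^2 = (xa-α)^2+(yb-β)^2 + 2*(xa*xc) := by
      linear_combination xa*hα2 + yb*hβ2 + hbe
    linarith [key, hac]
  exact ⟨EllipseSet EP IP aell, aell, ⟨hlt, rfl⟩, hT12, hT23, hT34, hT41⟩
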